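/- arXiv:1909.09807 — 6 statements merged into one kernel-verified Lean document; each statement's English description precedes it below -/
import Mathlib

section
/- Termination with an explicit bound: every sequence of repair states (t₀, VA₀), (t₁, VA₁), …, (t_k, VA_k) in which each consecutive pair is obtained by a rule application step satisfies k ≤ |A| − |VA₀|; in particular, starting from (t, ∅), at most |A| rules can be applied before the process ends. -/
/-- A matching rectifying rule over attributes `A` and values `V`. -/
structure MRRule (A V : Type) [DecidableEq A] [DecidableEq V] where
  /-- the evidence attributes -/
  X : Finset A
  /-- the director pattern -/
  DP : A → V
  /-- the target attribute -/
  y : A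
  hy : y ∉ X
  /-- the wrong patterns -/
  WP : Finset V
  /-- the correct pattern -/
  cp : V
  hcp : cp ∉ WP

variable {A V : Type} [Fintype A] [DecidableEq A] [DecidableEq V]

/-- Exact matching of a tuple against a rule. -/
def MRRule.Matches (r : MRRule A V) (t : A → V) : Prop :=
  (∀ a ∈ r.X, t a = r.DP a) ∧ t r.y ∈ insert r.cp r.WP

/-- Applying a rule to a tuple. -/
def MRRule.apply (r : MRRule A V) (t : A → V) : A → V :=
  fun b => if b = r.y then r.cp else if b ∈ r.X then r.DP b else t b

/-- A rule application step between repair states. -/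
def RuleStep (s s' : (A → V) × Finset A) : Prop :=
  ∃ r : MRRule A V, r.Matches s.1 ∧ (r.y ∉ s.2 ∨ ¬ r.X ⊆ s.2) ∧
    s' = (r.apply s.1, s.2 ∪ r.X ∪ {r.y})

/-- every sequence of repair states in which each consecutive
pair is obtained by a rule application step has length at most
`|A| - |VA₀|`; in particular, starting from `(t, ∅)`, at most `|A|` rules can
be applied. -/
theorem repair_sequence_length_bound
    (k : ℕ) (s : ℕ → (A → V) × Finset A)
    (hstep : ∀ i < k, RuleStep (s i) (s (i + 1))) :
    k ≤ Fintype.card A - (s 0).2.card := by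
  have hmono : ∀ i ≤ k, (s 0).2.card + i ≤ (s i).2.card := by
    intro i hi
    induction i with
    | zero => simp
    | succ n ih =>
      have hn : n < k := Nat.lt_of_succ_le hi
      have hstepn := hstep n hn
      obtain ⟨r, _, hcond, heq⟩ := hstepn
      have hss : (s n).2 ⊂ (s (n+1)).2 := by
        rw [heq]
        constructor
        · intro a ha
          simp [Finset.mem_union]
          tauto
        · intro hsub
          rcases hcond with h | h
          · exact h (hsub (by simp [Finset.mem_union]))
          · exact h (fun a ha => hsub (by simp [Finset.mem_union, ha]))
      have := Finset.card_lt_card hss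
      have := ih (Nat.le_of_lt hn)
      omega
  have hk := hmono k le_rfl
  have hcard : (s k).2.card ≤ Fintype.card A := Finset.card_le_univ _
  omega
end

section
/- Termination (Section 5.1): the step relation on repair states induced by applying matching rectifying rules is well-founded in the repairing direction, i.e., there is no infinite sequence of repair states (t₀, VA₀) → (t₁, VA₁) → … in which every arrow is a rule application step; hence every repairing process on every tuple ends. -/
variable {A V : Type} [Fintype A] [DecidableEq A] [DecidableEq V]

lemma ruleStep_ssubset {s s' : (A → V) × Finset A} (h : RuleStep s s') :
    s.2 ⊂ s'.2 := by
  obtain ⟨r, -, hcond, hs'⟩ := h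
  rw [hs']
  constructor
  · intro a ha
    simp [Finset.mem_union, ha]
  · intro hsub
    rcases hcond with hy | hX
    · exact hy (hsub (by simp))
    · exact hX fun x hx => hsub (by simp [hx])

lemma ruleStep_measure {s s' : (A → V) × Finset A} (h : RuleStep s s') :
    Fintype.card A - s'.2.card < Fintype.card A - s.2.card := by
  have h1 := Finset.card_lt_card (ruleStep_ssubset h)
  have h2 : s'.2.card ≤ Fintype.card A := Finset.card_le_univ _
  omega

/-- the step relation is well-founded in the repairing
direction, i.e., there is no infinite sequence of repair states in which
every arrow is a rule application step. -/
theorem repair_terminates :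
    WellFounded (fun s' s : (A → V) × Finset A => RuleStep s s') ∧
    ¬ ∃ s : ℕ → (A → V) × Finset A, ∀ i, RuleStep (s i) (s (i + 1)) := by
  constructor
  · exact Subrelation.wf (fun h => ruleStep_measure h)
      (InvImage.wf (fun s : (A → V) × Finset A => Fintype.card A - s.2.card)
        Nat.lt_wfRel.wf)
  · rintro ⟨s, hs⟩
    have : ∀ i, Fintype.card A - (s (i + 1)).2.card < Fintype.card A - (s i).2.card :=
      fun i => ruleStep_measure (hs i)
    have key : ∀ i, (Fintype.card A - (s i).2.card) + i ≤ Fintype.card A - (s 0).2.card := by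
      intro i
      induction i with
      | zero => omega
      | succ n ih => have := this n; omega
    have h0 := key (Fintype.card A + 1)
    omega
end

section
/- Sufficiency of consistency check, same-target case (condition 1 of Algorithm Inconsis-Res): let r_i, r_j be matching rectifying rules with the same target attribute y(r_i) = y(r_j) = y, the same correct pattern cp(r_i) = cp(r_j), and director patterns agreeing on the common evidence attributes: DP(r_i)(a) = DP(r_j)(a) for all a ∈ X(r_i) ∩ X(r_j). Then for every tuple t matching both rules, apply(r_i, t) matches r_j, apply(r_j, t) matches r_i, and apply(r_j, apply(r_i, t)) = apply(r_i, apply(r_j, t)); hence r_i and r_j are consistent. -/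
variable {A V : Type} [Fintype A] [DecidableEq A] [DecidableEq V]

/-- sufficiency of the consistency check, same-target case:
two rules with the same target attribute, the same correct pattern, and
director patterns agreeing on the common evidence attributes are
consistent. -/
theorem same_target_rules_consistent (ri rj : MRRule A V)
    (hy : ri.y = rj.y) (hcp : ri.cp = rj.cp)
    (hdp : ∀ a ∈ ri.X ∩ rj.X, ri.DP a = rj.DP a) :
    ∀ t : A → V, ri.Matches t → rj.Matches t →
      rj.Matches (ri.apply t) ∧ ri.Matches (rj.apply t) ∧
      rj.apply (ri.apply t) = ri.apply (rj.apply t) := by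
  intro t hti htj
  obtain ⟨hi1, hi2⟩ := hti
  obtain ⟨hj1, hj2⟩ := htj
  have key : ∀ (r s : MRRule A V), r.y = s.y → r.cp = s.cp →
      (∀ a ∈ r.X ∩ s.X, r.DP a = s.DP a) →
      (∀ a ∈ r.X, t a = r.DP a) → (∀ a ∈ s.X, t a = s.DP a) →
      s.Matches (r.apply t) := by
    intro r s hy' hcp' hdp' h1 h2
    constructor
    · intro a ha
      unfold MRRule.apply
      by_cases hay : a = r.y
      · exact absurd (hy' ▸ hay ▸ ha) s.hy
      · simp only [hay, if_false]
        by_cases hax : a ∈ r.X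
        · simp [hax, hdp' a (Finset.mem_inter.2 ⟨hax, ha⟩)]
        · simp [hax, h2 a ha]
    · unfold MRRule.apply
      simp [hy', hcp']
  refine ⟨key ri rj hy hcp hdp hi1 hj1,
    key rj ri hy.symm hcp.symm (fun a ha => (hdp a (Finset.inter_comm rj.X ri.X ▸ ha)).symm) hj1 hi1, ?_⟩
  funext b
  unfold MRRule.apply
  by_cases hbj : b = rj.y
  · subst hbj; simp [hy.symm, hcp]
  · have hbi : ¬ b = ri.y := hy ▸ hbj
    by_cases h1 : b ∈ ri.X <;> by_cases h2 : b ∈ rj.X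
    · simp [hbi, hbj, h1, h2, hdp b (Finset.mem_inter.2 ⟨h1, h2⟩)]
    all_goals simp [hbi, hbj, h1, h2]
end

section
/- Necessity of consistency check, same-target case (condition 1 of Algorithm Inconsis-Res): let r_i, r_j be matching rectifying rules with y(r_i) = y(r_j) = y, disjoint evidence attribute sets X(r_i) ∩ X(r_j) = ∅, distinct correct patterns cp(r_i) ≠ cp(r_j) with cp(r_i) ∉ WP(r_j) and cp(r_j) ∉ WP(r_i), and a shared wrong pattern v ∈ WP(r_i) ∩ WP(r_j). Then there exists a tuple t that matches both r_i and r_j such that apply(r_i, t) does not match r_j, apply(r_j, t) does not match r_i, and apply(r_i, t)(y) = cp(r_i) ≠ cp(r_j) = apply(r_j, t)(y); hence the final repair of t depends on the order of application, so r_i and r_j are inconsistent. -/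
variable {A V : Type} [Fintype A] [DecidableEq A] [DecidableEq V]

/-- necessity of the consistency check, same-target case:
two rules with the same target `y`, disjoint evidence attribute sets,
distinct correct patterns not occurring in each other's wrong patterns, and
a shared wrong pattern, are inconsistent: some tuple matching both rules is
rectified differently depending on the order of application. -/
theorem same_target_rules_inconsistent (ri rj : MRRule A V)
    (y : A) (hyi : ri.y = y) (hyj : rj.y = y)
    (hX : ri.X ∩ rj.X = ∅)
    (hcp : ri.cp ≠ rj.cp)
    (hij : ri.cp ∉ rj.WP) (hji : rj.cp ∉ ri.WP)
    (v : V) (hv : v ∈ ri.WP ∩ rj.WP) :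
    ∃ t : A → V, ri.Matches t ∧ rj.Matches t ∧
      ¬ rj.Matches (ri.apply t) ∧ ¬ ri.Matches (rj.apply t) ∧
      ri.apply t y = ri.cp ∧ rj.apply t y = rj.cp ∧
      ri.apply t y ≠ rj.apply t y := by
  rw [Finset.mem_inter] at hv
  obtain ⟨hvi, hvj⟩ := hv
  set t : A → V := fun a =>
    if a ∈ ri.X then ri.DP a else if a ∈ rj.X then rj.DP a else v with ht
  have hdisj : ∀ a, a ∈ ri.X → a ∈ rj.X → False := by
    intro a h1 h2
    have : a ∈ ri.X ∩ rj.X := Finset.mem_inter.mpr ⟨h1, h2⟩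
    simp [hX] at this
  have hyni : y ∉ ri.X := hyi ▸ ri.hy
  have hynj : y ∉ rj.X := hyj ▸ rj.hy
  have hty : t y = v := by simp [ht, hyni, hynj]
  refine ⟨t, ⟨?_, ?_⟩, ⟨?_, ?_⟩, ?_, ?_, ?_, ?_, ?_⟩
  · intro a ha; simp [ht, ha]
  · rw [hyi, hty]; exact Finset.mem_insert_of_mem hvi
  · intro a ha
    have : a ∉ ri.X := fun h => hdisj a h ha
    simp [ht, this, ha]
  · rw [hyj, hty]; exact Finset.mem_insert_of_mem hvj
  · rintro ⟨-, h2⟩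
    rw [hyj, MRRule.apply, hyi] at h2
    simp only [if_pos rfl] at h2
    rcases Finset.mem_insert.mp h2 with h | h
    · exact hcp h
    · exact hij h
  · rintro ⟨-, h2⟩
    rw [hyi, MRRule.apply, hyj] at h2
    simp only [if_pos rfl] at h2
    rcases Finset.mem_insert.mp h2 with h | h
    · exact hcp h.symm
    · exact hji h
  · simp [MRRule.apply, hyi]
  · simp [MRRule.apply, hyj]
  · simp [MRRule.apply, hyi, hyj, hcp]
end

section
/- Sufficiency of consistency check, target-in-evidence case (condition 2 of Algorithm Inconsis-Res): let r_i, r_j be matching rectifying rules with distinct targets y(r_i) ≠ y(r_j), such that y(r_j) ∈ X(r_i), y(r_i) ∉ X(r_j), the director patterns agree on the common evidence attributes (DP(r_i)(a) = DP(r_j)(a) for all a ∈ X(r_i) ∩ X(r_j)), and DP(r_i)(y(r_j)) = cp(r_j). Then for every tuple t matching both rules, apply(r_i, t) matches r_j, apply(r_j, t) matches r_i, and apply(r_j, apply(r_i, t)) = apply(r_i, apply(r_j, t)); hence r_i and r_j are consistent. -/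
variable {A V : Type} [Fintype A] [DecidableEq A] [DecidableEq V]

/-- sufficiency of the consistency check, target-in-evidence
case: two rules with distinct targets such that `y(r_j) ∈ X(r_i)`,
`y(r_i) ∉ X(r_j)`, director patterns agreeing on common evidence attributes,
and `DP(r_i)(y(r_j)) = cp(r_j)`, are consistent. -/
theorem target_in_evidence_rules_consistent (ri rj : MRRule A V)
    (hyy : ri.y ≠ rj.y)
    (hji : rj.y ∈ ri.X) (hij : ri.y ∉ rj.X)
    (hdp : ∀ a ∈ ri.X ∩ rj.X, ri.DP a = rj.DP a)
    (hd : ri.DP rj.y = rj.cp) :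
    ∀ t : A → V, ri.Matches t → rj.Matches t →
      rj.Matches (ri.apply t) ∧ ri.Matches (rj.apply t) ∧
      rj.apply (ri.apply t) = ri.apply (rj.apply t) := by
  intro t ⟨hti, htiy⟩ ⟨htj, htjy⟩
  have hdp' : ∀ a, a ∈ ri.X → a ∈ rj.X → ri.DP a = rj.DP a := fun a h1 h2 =>
    hdp a (Finset.mem_inter.mpr ⟨h1, h2⟩)
  refine ⟨⟨?_, ?_⟩, ⟨?_, ?_⟩, ?_⟩
  · intro a ha
    have hane : a ≠ ri.y := fun h => hij (h ▸ ha)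
    simp only [MRRule.apply, if_neg hane]
    by_cases hax : a ∈ ri.X
    · simp [hax, hdp' a hax ha]
    · simp [hax, htj a ha]
  · simp only [MRRule.apply, if_neg (Ne.symm hyy), if_pos hji, hd]
    exact Finset.mem_insert_self _ _
  · intro a ha
    simp only [MRRule.apply]
    by_cases hay : a = rj.y
    · subst hay; simp [hd.symm]
    · simp only [if_neg hay]
      by_cases hax : a ∈ rj.X
      · simp [hax, (hdp' a ha hax).symm]
      · simp [hax, hti a ha]
  · simp only [MRRule.apply, if_neg hyy, if_neg hij]
    exact htiy
  · funext b
    simp only [MRRule.apply]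
    by_cases hbj : b = rj.y
    · subst hbj
      simp [Ne.symm hyy, hji, hd]
    · by_cases hbi : b = ri.y
      · subst hbi
        simp [hyy, hbj, hij]
      · simp only [if_neg hbj, if_neg hbi]
        by_cases hbx : b ∈ rj.X
        · simp only [if_pos hbx]
          by_cases hbx' : b ∈ ri.X
          · simp [hbx', hdp' b hbx' hbx]
          · simp [hbx']
        · simp [hbx]
end

section
/- Sufficiency of consistency check, mutual target-in-evidence case (condition 4 of Algorithm Inconsis-Res): let r_i, r_j be matching rectifying rules with distinct targets y(r_i) ≠ y(r_j), such that y(r_j) ∈ X(r_i), y(r_i) ∈ X(r_j), the director patterns agree on the common evidence attributes (DP(r_i)(a) = DP(r_j)(a) for all a ∈ X(r_i) ∩ X(r_j)), DP(r_i)(y(r_j)) = cp(r_j), and DP(r_j)(y(r_i)) = cp(r_i). Then for every tuple t matching both rules, apply(r_i, t) matches r_j, apply(r_j, t) matches r_i, and apply(r_j, apply(r_i, t)) = apply(r_i, apply(r_j, t)); hence r_i and r_j are consistent. -/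
variable {A V : Type} [Fintype A] [DecidableEq A] [DecidableEq V]

/-- sufficiency of the consistency check, mutual
target-in-evidence case: two rules with distinct targets such that
`y(r_j) ∈ X(r_i)`, `y(r_i) ∈ X(r_j)`, director patterns agreeing on common
evidence attributes, `DP(r_i)(y(r_j)) = cp(r_j)` and
`DP(r_j)(y(r_i)) = cp(r_i)`, are consistent. -/
theorem mutual_target_in_evidence_rules_consistent (ri rj : MRRule A V)
    (hyy : ri.y ≠ rj.y)
    (hji : rj.y ∈ ri.X) (hij : ri.y ∈ rj.X)
    (hdp : ∀ a ∈ ri.X ∩ rj.X, ri.DP a = rj.DP a)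
    (hdi : ri.DP rj.y = rj.cp) (hdj : rj.DP ri.y = ri.cp) :
    ∀ t : A → V, ri.Matches t → rj.Matches t →
      rj.Matches (ri.apply t) ∧ ri.Matches (rj.apply t) ∧
      rj.apply (ri.apply t) = ri.apply (rj.apply t) := by

  intro t hi hj
  have hdp' : ∀ a, a ∈ ri.X → a ∈ rj.X → ri.DP a = rj.DP a := by
    intro a h1 h2; exact hdp a (Finset.mem_inter.mpr ⟨h1, h2⟩)
  refine ⟨⟨?_, ?_⟩, ⟨?_, ?_⟩, ?_⟩
  · intro a ha
    unfold MRRule.apply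
    by_cases h1 : a = ri.y
    · subst h1; simp [hdj]
    · simp only [if_neg h1]
      by_cases h2 : a ∈ ri.X
      · simp [h2, hdp' a h2 ha]
      · simp [h2, hj.1 a ha]
  · unfold MRRule.apply
    rw [if_neg (Ne.symm hyy), if_pos hji, hdi]
    exact Finset.mem_insert_self _ _
  · intro a ha
    unfold MRRule.apply
    by_cases h1 : a = rj.y
    · subst h1; simp [hdi]
    · simp only [if_neg h1]
      by_cases h2 : a ∈ rj.X
      · simp [h2, (hdp' a ha h2).symm]
      · simp [h2, hi.1 a ha]
  · unfold MRRule.apply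
    rw [if_neg hyy, if_pos hij, hdj]
    exact Finset.mem_insert_self _ _
  · funext b
    unfold MRRule.apply
    by_cases h1 : b = ri.y
    · subst h1
      simp [hyy, hij, hdj]
    · by_cases h2 : b = rj.y
      · subst h2
        simp [Ne.symm hyy, hji, hdi]
      · simp only [if_neg h1, if_neg h2]
        by_cases h3 : b ∈ ri.X
        · by_cases h4 : b ∈ rj.X
          · simp [h3, h4, hdp' b h3 h4]
          · simp [h3, h4]
        · by_cases h4 : b ∈ rj.X
          · simp [h3, h4]
          · simp [h3, h4]
end
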